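/- The function ϑ is radially non-increasing: for all x₁, x₂ ∈ ℝ^d with |x₁| ≤ |x₂|, one has ϑ(x₂) ≤ ϑ(x₁). -/

import Mathlib

open MeasureTheory

/-- The standard bump function `ω(x) = exp(−1/(1−|x|²))` for `|x| < 1`, `0` otherwise. -/
noncomputable def stdBump (d : ℕ) (x : EuclideanSpace ℝ (Fin d)) : ℝ :=
  if ‖x‖ < 1 then Real.exp (-1 / (1 - ‖x‖ ^ 2)) else 0

/-- The cut-off function `ϑ(x) = 2^{−d} ∫ 𝟙{|y−x| ≤ 1} ω(2y) dy`. -/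
noncomputable def cutoff (d : ℕ) (x : EuclideanSpace ℝ (Fin d)) : ℝ :=
  (2 : ℝ) ^ (-(d : ℤ)) *
    ∫ y in {y : EuclideanSpace ℝ (Fin d) | ‖y - x‖ ≤ 1}, stdBump d ((2 : ℝ) • y)

open Metric InnerProductSpace

private lemma stdBump_nonneg {d : ℕ} (x : EuclideanSpace ℝ (Fin d)) : 0 ≤ stdBump d x := by
  unfold stdBump; split
  · exact (Real.exp_pos _).le
  · exact le_refl 0

private lemma stdBump_le_one {d : ℕ} (x : EuclideanSpace ℝ (Fin d)) : stdBump d x ≤ 1 := by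
  unfold stdBump; split
  · rename_i h
    have h1 : 0 < 1 - ‖x‖ ^ 2 := by nlinarith [norm_nonneg x]
    have : -1 / (1 - ‖x‖ ^ 2) ≤ 0 := by
      apply div_nonpos_of_nonpos_of_nonneg <;> linarith
    calc Real.exp (-1 / (1 - ‖x‖ ^ 2)) ≤ Real.exp 0 := Real.exp_le_exp.2 this
    _ = 1 := Real.exp_zero
  · exact zero_le_one

private lemma stdBump_anti {d : ℕ} {a b : EuclideanSpace ℝ (Fin d)} (h : ‖a‖ ≤ ‖b‖) :
    stdBump d b ≤ stdBump d a := by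
  unfold stdBump
  by_cases hb : ‖b‖ < 1
  · have ha : ‖a‖ < 1 := lt_of_le_of_lt h hb
    rw [if_pos hb, if_pos ha]
    apply Real.exp_le_exp.2
    have h1 : 0 < 1 - ‖b‖ ^ 2 := by nlinarith [norm_nonneg b]
    have h2 : 1 - ‖b‖ ^ 2 ≤ 1 - ‖a‖ ^ 2 := by nlinarith [norm_nonneg a]
    rw [neg_div, neg_div, neg_le_neg_iff]
    exact one_div_le_one_div_of_le h1 h2
  · rw [if_neg hb]
    split
    · exact (Real.exp_pos _).le
    · exact le_refl 0

private lemma stdBump_measurable (d : ℕ) : Measurable (stdBump d) := by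
  unfold stdBump
  exact Measurable.ite (measurableSet_lt measurable_norm measurable_const)
    (by fun_prop) measurable_const

private lemma g_measurable (d : ℕ) :
    Measurable (fun y : EuclideanSpace ℝ (Fin d) => stdBump d ((2:ℝ) • y)) :=
  (stdBump_measurable d).comp (by fun_prop)

private lemma g_integrable (d : ℕ) :
    Integrable (fun y : EuclideanSpace ℝ (Fin d) => stdBump d ((2:ℝ) • y)) := by
  set g := fun y : EuclideanSpace ℝ (Fin d) => stdBump d ((2:ℝ) • y) with hg
  have hbound : Integrable ((closedBall (0:EuclideanSpace ℝ (Fin d)) 1).indicator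
      (fun _ => (1:ℝ))) :=
    (integrableOn_const measure_closedBall_lt_top.ne).integrable_indicator
      measurableSet_closedBall
  refine hbound.mono' (g_measurable d).aestronglyMeasurable ?_
  filter_upwards with y
  rw [Real.norm_eq_abs, abs_of_nonneg (stdBump_nonneg _)]
  by_cases hy : y ∈ closedBall (0:EuclideanSpace ℝ (Fin d)) 1
  · rw [Set.indicator_of_mem hy]
    exact stdBump_le_one _
  · rw [Set.indicator_of_notMem hy]
    have : ¬ ‖(2:ℝ) • y‖ < 1 := by
      rw [norm_smul]
      simp only [mem_closedBall, dist_zero_right, not_le] at hy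
      push_neg
      have := hy.le
      simp only [Real.norm_eq_abs]
      rw [abs_of_nonneg (by norm_num : (0:ℝ) ≤ 2)] at *; nlinarith
    simp only [g, stdBump, if_neg this, le_refl]

set_option maxHeartbeats 1000000 in
private lemma key_ineq {d : ℕ} (x₁ x₂ : EuclideanSpace ℝ (Fin d)) (hx : ‖x₁‖ ≤ ‖x₂‖) :
    ∫ y in closedBall x₂ 1, stdBump d ((2:ℝ) • y) ≤
      ∫ y in closedBall x₁ 1, stdBump d ((2:ℝ) • y) := by
  rcases eq_or_ne x₁ x₂ with rfl | hne
  · exact le_refl _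
  set g : EuclideanSpace ℝ (Fin d) → ℝ := fun y => stdBump d ((2:ℝ) • y) with hgdef
  have hganti : ∀ {a b : EuclideanSpace ℝ (Fin d)}, ‖a‖ ≤ ‖b‖ → g b ≤ g a := by
    intro a b hab
    refine stdBump_anti ?_
    rw [norm_smul, norm_smul]
    exact mul_le_mul_of_nonneg_left hab (norm_nonneg _)
  -- set up the reflection data
  set v : EuclideanSpace ℝ (Fin d) := x₂ - x₁ with hvdef
  have hv : v ≠ 0 := sub_ne_zero.2 (Ne.symm hne)
  have hvnorm : (0:ℝ) < ‖v‖ := norm_pos_iff.2 hv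
  set u : EuclideanSpace ℝ (Fin d) := ‖v‖⁻¹ • v with hudef
  have hu : ‖u‖ = 1 := norm_smul_inv_norm hv
  have hvu : v = ‖v‖ • u := by
    rw [hudef, smul_smul, mul_inv_cancel₀ hvnorm.ne', one_smul]
  have huu : ⟪u, u⟫_ℝ = 1 := by
    rw [real_inner_self_eq_norm_sq, hu]; norm_num
  set c : ℝ := (⟪u, x₁⟫_ℝ + ⟪u, x₂⟫_ℝ) / 2 with hcdef
  have hvin : ∀ w : EuclideanSpace ℝ (Fin d), ⟪v, w⟫_ℝ = ‖v‖ * ⟪u, w⟫_ℝ := by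
    intro w
    rw [hudef, real_inner_smul_left]
    field_simp
  have huv : ⟪u, v⟫_ℝ = ‖v‖ := by
    have h := hvin v
    rw [real_inner_self_eq_norm_sq] at h
    refine mul_left_cancel₀ hvnorm.ne' ?_
    rw [← h]; ring
  have hux : ⟪u, x₂⟫_ℝ - ⟪u, x₁⟫_ℝ = ‖v‖ := by
    rw [← huv, hvdef, inner_sub_right]
  have hc1 : c - ⟪u, x₁⟫_ℝ = ‖v‖ / 2 := by rw [hcdef]; linarith
  have hc2 : ⟪u, x₂⟫_ℝ - c = ‖v‖ / 2 := by rw [hcdef]; linarith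
  have hc0 : 0 ≤ c := by
    have h1 : ⟪v, x₁ + x₂⟫_ℝ = ‖x₂‖ ^ 2 - ‖x₁‖ ^ 2 := by
      rw [hvdef, inner_sub_left, inner_add_right, inner_add_right,
        real_inner_self_eq_norm_sq, real_inner_self_eq_norm_sq, real_inner_comm x₁ x₂]
      ring
    have h2 : ⟪v, x₁ + x₂⟫_ℝ = ‖v‖ * (2 * c) := by
      rw [hvin (x₁ + x₂), hcdef, inner_add_right]; ring
    have h3 : 0 ≤ ‖x₂‖ ^ 2 - ‖x₁‖ ^ 2 := by
      nlinarith [norm_nonneg x₁, norm_nonneg x₂]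
    nlinarith
  -- the reflection map
  set R : EuclideanSpace ℝ (Fin d) → EuclideanSpace ℝ (Fin d) := fun y => y + (2 * (c - ⟪u, y⟫_ℝ)) • u with hRdef
  have hRu : ∀ y : EuclideanSpace ℝ (Fin d), ⟪u, R y⟫_ℝ = 2 * c - ⟪u, y⟫_ℝ := by
    intro y
    simp only [hRdef, inner_add_right, real_inner_smul_right, huu]
    ring
  have hinv : Function.Involutive R := by
    intro y
    simp only [hRdef]
    rw [show ⟪u, y + (2 * (c - ⟪u, y⟫_ℝ)) • u⟫_ℝ = 2 * c - ⟪u, y⟫_ℝ from by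
      simp only [inner_add_right, real_inner_smul_right, huu]; ring]
    rw [add_assoc, ← add_smul]
    rw [show 2 * (c - ⟪u, y⟫_ℝ) + 2 * (c - (2 * c - ⟪u, y⟫_ℝ)) = 0 from by ring,
      zero_smul, add_zero]
  have h1cont : Continuous fun y : EuclideanSpace ℝ (Fin d) => ⟪u, y⟫_ℝ :=
    continuous_const.inner continuous_id
  have hRcont : Continuous R :=
    continuous_id.add ((continuous_const.mul (continuous_const.sub h1cont)).smul continuous_const)
  -- measurable embedding
  have hemb : MeasurableEmbedding R :=
    MeasurableEquiv.measurableEmbedding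
      { toEquiv := Function.Involutive.toPerm R hinv
        measurable_toFun := hRcont.measurable
        measurable_invFun := hRcont.measurable }
  -- R as translation of a linear reflection
  have hrefl : ∀ y : EuclideanSpace ℝ (Fin d),
      (Submodule.reflection (ℝ ∙ u)ᗮ) y = y - (2 * ⟪u, y⟫_ℝ) • u := by
    intro y
    rw [Submodule.reflection_apply, Submodule.starProjection_orthogonal_val, Submodule.starProjection_singleton,
      hu]
    norm_num
    module
  have hcomp : R = (fun z => z + (2 * c) • u) ∘ (Submodule.reflection (ℝ ∙ u)ᗮ) := by
    funext y
    simp only [Function.comp_apply, hrefl y, hRdef]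
    module
  have hmp : MeasurePreserving R volume volume := by
    rw [hcomp]
    exact (measurePreserving_add_right volume ((2 * c) • u)).comp
      (Submodule.reflection (ℝ ∙ u)ᗮ).measurePreserving
  -- R is an isometry that swaps x₁ and x₂
  have hRdist : ∀ y z : EuclideanSpace ℝ (Fin d), ‖R y - R z‖ = ‖y - z‖ := by
    intro y z
    rw [congrFun hcomp y, congrFun hcomp z]
    simp only [Function.comp_apply, add_sub_add_right_eq_sub]
    rw [← LinearIsometryEquiv.map_sub, LinearIsometryEquiv.norm_map]
  have hRx₁ : R x₁ = x₂ := by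
    show x₁ + (2 * (c - ⟪u, x₁⟫_ℝ)) • u = x₂
    rw [show 2 * (c - ⟪u, x₁⟫_ℝ) = ‖v‖ from by rw [hc1]; ring, ← hvu, hvdef]
    abel
  have hRx₂ : R x₂ = x₁ := by
    show x₂ + (2 * (c - ⟪u, x₂⟫_ℝ)) • u = x₁
    have h : 2 * (c - ⟪u, x₂⟫_ℝ) = -‖v‖ := by linarith
    rw [h, neg_smul, ← hvu, hvdef]
    abel
  have hswap1 : ∀ y, ‖R y - x₁‖ = ‖y - x₂‖ := fun y => by
    conv_lhs => rw [← hRx₂]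
    exact hRdist y x₂
  have hswap2 : ∀ y, ‖R y - x₂‖ = ‖y - x₁‖ := fun y => by
    conv_lhs => rw [← hRx₁]
    exact hRdist y x₁
  -- norm of R y
  have hRnormsq : ∀ y, ‖R y‖ ^ 2 = ‖y‖ ^ 2 + 4 * c * (c - ⟪u, y⟫_ℝ) := by
    intro y
    show ‖y + (2 * (c - ⟪u, y⟫_ℝ)) • u‖ ^ 2 = _
    rw [norm_add_sq_real, real_inner_smul_right, norm_smul, Real.norm_eq_abs, hu, mul_one,
      real_inner_comm y u, sq_abs]
    ring
  -- difference of distances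
  have hA : ⟪v, x₁ + x₂⟫_ℝ = ‖x₂‖ ^ 2 - ‖x₁‖ ^ 2 := by
    rw [hvdef, inner_sub_left, inner_add_right, inner_add_right,
      real_inner_self_eq_norm_sq, real_inner_self_eq_norm_sq, real_inner_comm x₁ x₂]
    ring
  have hB : ⟪v, x₁ + x₂⟫_ℝ = ‖v‖ * (2 * c) := by
    rw [hvin (x₁ + x₂), hcdef, inner_add_right]; ring
  have hdiff : ∀ y, ‖y - x₁‖ ^ 2 - ‖y - x₂‖ ^ 2 = 2 * ‖v‖ * (⟪u, y⟫_ℝ - c) := by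
    intro y
    have e1 : ⟪y, x₂⟫_ℝ - ⟪y, x₁⟫_ℝ = ‖v‖ * ⟪u, y⟫_ℝ := by
      rw [← inner_sub_right, ← hvdef, real_inner_comm, hvin y]
    have e2 : ‖x₂‖ ^ 2 - ‖x₁‖ ^ 2 = ‖v‖ * (2 * c) := by rw [← hA, hB]
    rw [norm_sub_sq_real, norm_sub_sq_real]
    linear_combination 2 * e1 - e2
  -- pointwise inequality
  have hpt : ∀ y, (closedBall x₂ 1).indicator g y + (closedBall x₂ 1).indicator g (R y)
      ≤ (closedBall x₁ 1).indicator g y + (closedBall x₁ 1).indicator g (R y) := by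
    intro y
    have hmem2 : R y ∈ closedBall x₂ 1 ↔ y ∈ closedBall x₁ 1 := by
      simp only [mem_closedBall_iff_norm, hswap2]
    have hmem1 : R y ∈ closedBall x₁ 1 ↔ y ∈ closedBall x₂ 1 := by
      simp only [mem_closedBall_iff_norm, hswap1]
    by_cases h1 : y ∈ closedBall x₁ 1 <;> by_cases h2 : y ∈ closedBall x₂ 1
    · rw [Set.indicator_of_mem h1, Set.indicator_of_mem h2,
        Set.indicator_of_mem (hmem1.2 h2), Set.indicator_of_mem (hmem2.2 h1)]
    · rw [Set.indicator_of_mem h1, Set.indicator_of_notMem h2,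
        Set.indicator_of_notMem (fun h => h2 (hmem1.1 h)), Set.indicator_of_mem (hmem2.2 h1)]
      have hn1 : ‖y - x₁‖ ≤ 1 := mem_closedBall_iff_norm.1 h1
      have hn2 : 1 < ‖y - x₂‖ := by
        by_contra h
        exact h2 (mem_closedBall_iff_norm.2 (not_lt.1 h))
      have ht : ⟪u, y⟫_ℝ ≤ c := by
        have hd := hdiff y
        nlinarith [norm_nonneg (y - x₁), norm_nonneg (y - x₂)]
      have hnorm : ‖y‖ ≤ ‖R y‖ := by
        have := hRnormsq y
        nlinarith [norm_nonneg y, norm_nonneg (R y)]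
      have := hganti hnorm
      linarith
    · rw [Set.indicator_of_notMem h1, Set.indicator_of_mem h2,
        Set.indicator_of_mem (hmem1.2 h2), Set.indicator_of_notMem (fun h => h1 (hmem2.1 h))]
      have hn2 : ‖y - x₂‖ ≤ 1 := mem_closedBall_iff_norm.1 h2
      have hn1 : 1 < ‖y - x₁‖ := by
        by_contra h
        exact h1 (mem_closedBall_iff_norm.2 (not_lt.1 h))
      have ht : c ≤ ⟪u, y⟫_ℝ := by
        have hd := hdiff y
        nlinarith [norm_nonneg (y - x₁), norm_nonneg (y - x₂)]
      have hnorm : ‖R y‖ ≤ ‖y‖ := by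
        have := hRnormsq y
        nlinarith [norm_nonneg y, norm_nonneg (R y)]
      have := hganti hnorm
      linarith
    · rw [Set.indicator_of_notMem h1, Set.indicator_of_notMem h2,
        Set.indicator_of_notMem (fun h => h2 (hmem1.1 h)),
        Set.indicator_of_notMem (fun h => h1 (hmem2.1 h))]
  -- integrate
  have hF₁int : Integrable ((closedBall x₁ 1).indicator g) :=
    (g_integrable d).indicator measurableSet_closedBall
  have hF₂int : Integrable ((closedBall x₂ 1).indicator g) :=
    (g_integrable d).indicator measurableSet_closedBall
  have hF₁Rint : Integrable (fun y => (closedBall x₁ 1).indicator g (R y)) := by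
    have h := (hmp.integrable_comp_emb hemb).2 hF₁int
    exact h
  have hF₂Rint : Integrable (fun y => (closedBall x₂ 1).indicator g (R y)) := by
    have h := (hmp.integrable_comp_emb hemb).2 hF₂int
    exact h
  have hint1 : ∫ y, (closedBall x₁ 1).indicator g (R y) = ∫ y, (closedBall x₁ 1).indicator g y :=
    hmp.integral_comp hemb _
  have hint2 : ∫ y, (closedBall x₂ 1).indicator g (R y) = ∫ y, (closedBall x₂ 1).indicator g y :=
    hmp.integral_comp hemb _
  have hineq : (∫ y, ((closedBall x₂ 1).indicator g y + (closedBall x₂ 1).indicator g (R y))) ≤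
      ∫ y, ((closedBall x₁ 1).indicator g y + (closedBall x₁ 1).indicator g (R y)) :=
    integral_mono (hF₂int.add hF₂Rint) (hF₁int.add hF₁Rint) hpt
  rw [integral_add hF₂int hF₂Rint, integral_add hF₁int hF₁Rint, hint1, hint2] at hineq
  have e₁ : ∫ y in closedBall x₁ 1, g y = ∫ y, (closedBall x₁ 1).indicator g y :=
    (integral_indicator measurableSet_closedBall).symm
  have e₂ : ∫ y in closedBall x₂ 1, g y = ∫ y, (closedBall x₂ 1).indicator g y :=
    (integral_indicator measurableSet_closedBall).symm
  show ∫ y in closedBall x₂ 1, g y ≤ ∫ y in closedBall x₁ 1, g y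
  rw [e₁, e₂]
  linarith

/-- The cut-off function `ϑ` is radially non-increasing. -/
theorem stmt14 {d : ℕ} (x₁ x₂ : EuclideanSpace ℝ (Fin d)) (hx : ‖x₁‖ ≤ ‖x₂‖) :
    cutoff d x₂ ≤ cutoff d x₁ := by
  unfold cutoff
  have hset : ∀ x : EuclideanSpace ℝ (Fin d),
      {y : EuclideanSpace ℝ (Fin d) | ‖y - x‖ ≤ 1} = closedBall x 1 := by
    intro x; ext y; simp [dist_eq_norm]
  rw [hset, hset]
  exact mul_le_mul_of_nonneg_left (key_ineq x₁ x₂ hx) (by positivity)
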